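/- Let (a_n) and (c_n) be sequences of positive reals such that (a_n) is bounded, c_n → +∞, and ∑ a_n = +∞. Then there exists a strictly decreasing sequence (r_n) of positive reals such that ∑ a_n r_n < +∞ and ∑ a_n c_n r_n = +∞. -/

import Mathlib

open Finset Filter

/-- Lemma 1 of the paper. Given positive sequences (a_n) bounded,
(c_n) → ∞, and ∑ a_n = ∞, there is a strictly decreasing positive sequence (r_n)
with ∑ a_n r_n < ∞ and ∑ a_n c_n r_n = ∞. -/
theorem stmt0 (a c : ℕ → ℝ)
    (ha_pos : ∀ n, 0 < a n) (hc_pos : ∀ n, 0 < c n)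
    (ha_bdd : ∃ B : ℝ, ∀ n, a n ≤ B)
    (hc : Filter.Tendsto c Filter.atTop Filter.atTop)
    (ha_div : ∑' n, ENNReal.ofReal (a n) = ⊤) :
    ∃ r : ℕ → ℝ, (∀ n, 0 < r n) ∧ StrictAnti r ∧
      (∑' n, ENNReal.ofReal (a n * r n)) ≠ ⊤ ∧
      (∑' n, ENNReal.ofReal (a n * c n * r n)) = ⊤ := by
  have ha_nonneg : ∀ n, 0 ≤ a n := fun n => (ha_pos n).le
  have ha_nsum : ¬ Summable a := by
    intro h
    rw [← ENNReal.ofReal_tsum_of_nonneg ha_nonneg h] at ha_div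
    exact ENNReal.ofReal_ne_top ha_div
  have hS : Tendsto (fun N => ∑ i ∈ range N, a i) atTop atTop :=
    (not_summable_iff_tendsto_nat_atTop_of_nonneg ha_nonneg).1 ha_nsum
  -- existence of the next block boundary
  have hex : ∀ (s k : ℕ), ∃ m, s < m ∧ (∀ i, m ≤ i → (2:ℝ)^k ≤ c i) ∧
      1 + ∑ i ∈ range s, a i ≤ ∑ i ∈ Ico s m, a i := by
    intro s k
    obtain ⟨T, hT⟩ := eventually_atTop.mp (hc.eventually_ge_atTop ((2:ℝ)^k))
    obtain ⟨M, hM⟩ := eventually_atTop.mp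
      (hS.eventually_ge_atTop (1 + 2 * ∑ i ∈ range s, a i))
    refine ⟨max (max T (s+1)) M, ?_, ?_, ?_⟩
    · have h1 : s + 1 ≤ max (max T (s+1)) M :=
        le_trans (le_max_right T (s+1)) (le_max_left _ _)
      omega
    · intro i hi
      exact hT i (le_trans (le_trans (le_max_left T (s+1)) (le_max_left _ _)) hi)
    · have hsm : s ≤ max (max T (s+1)) M := by
        have : s + 1 ≤ max (max T (s+1)) M :=
          le_trans (le_max_right T (s+1)) (le_max_left _ _)
        omega
      rw [Finset.sum_Ico_eq_sub _ hsm]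
      have := hM (max (max T (s+1)) M) (le_max_right _ _)
      linarith
  choose f hf1 hf2 hf3 using hex
  -- the block boundaries
  obtain ⟨n, hn0, hnS⟩ : ∃ n : ℕ → ℕ, n 0 = 0 ∧ ∀ k, n (k+1) = f (n k) (k+1) :=
    ⟨fun k => Nat.rec 0 (fun k nk => f nk (k+1)) k, rfl, fun _ => rfl⟩
  have hnmono : StrictMono n := by
    apply strictMono_nat_of_lt_succ
    intro k
    rw [hnS k]; exact hf1 (n k) (k+1)
  have hn_le : ∀ k, k ≤ n k := fun k => hnmono.le_apply
  -- c bound on blocks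
  have hcb : ∀ k i, n (k+1) ≤ i → (2:ℝ)^(k+1) ≤ c i := by
    intro k i hi
    exact hf2 (n k) (k+1) i (by rw [hnS k] at hi; exact hi)
  -- block sums
  set A : ℕ → ℝ := fun k => ∑ i ∈ Ico (n k) (n (k+1)), a i with hA
  have hA_ge : ∀ k, 1 + ∑ i ∈ range (n k), a i ≤ A k := by
    intro k
    have := hf3 (n k) (k+1)
    rw [← hnS k] at this
    exact this
  have hA1 : ∀ k, 1 ≤ A k := by
    intro k
    have h1 := hA_ge k
    have h2 : (0:ℝ) ≤ ∑ i ∈ range (n k), a i := Finset.sum_nonneg fun i _ => ha_nonneg i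
    linarith
  have hA0 : ∀ k, 0 < A k := fun k => lt_of_lt_of_le one_pos (hA1 k)
  have hAmono : Monotone A := by
    apply monotone_nat_of_le_succ
    intro k
    have h1 : A k ≤ ∑ i ∈ range (n (k+1)), a i := by
      apply Finset.sum_le_sum_of_subset_of_nonneg
      · intro i hi
        rw [Finset.mem_Ico] at hi
        exact Finset.mem_range.2 hi.2
      · intro i _ _; exact ha_nonneg i
    have h2 := hA_ge (k+1)
    linarith
  -- the weights
  set t : ℕ → ℝ := fun k => (1/2:ℝ)^k / A k with ht
  have ht0 : ∀ k, 0 < t k := fun k => div_pos (by positivity) (hA0 k)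
  have htanti : Antitone t := by
    intro j k hjk
    apply div_le_div₀ (by positivity)
      (pow_le_pow_of_le_one (by norm_num) (by norm_num) hjk) (hA0 j) (hAmono hjk)
  have ht_half : ∀ k, t (k+1) ≤ t k / 2 := by
    intro k
    have : t (k+1) ≤ (1/2:ℝ)^(k+1) / A k :=
      div_le_div_of_nonneg_left (by positivity) (hA0 k) (hAmono (Nat.le_succ k))
    calc t (k+1) ≤ (1/2:ℝ)^(k+1) / A k := this
      _ = ((1/2:ℝ)^k / A k) / 2 := by ring
      _ = t k / 2 := rfl
  -- block index
  set K : ℕ → ℕ := fun m => Nat.findGreatest (fun k => n k ≤ m) m with hK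
  have hK1 : ∀ m, n (K m) ≤ m := by
    intro m
    exact Nat.findGreatest_spec (P := fun k => n k ≤ m) (Nat.zero_le m)
      (show n 0 ≤ m by rw [hn0]; exact Nat.zero_le m)
  have hK2 : ∀ m, m < n (K m + 1) := by
    intro m
    by_contra h
    push_neg at h
    have h1 : K m + 1 ≤ m := le_trans (hn_le (K m + 1)) h
    have h2 : K m + 1 ≤ K m := Nat.le_findGreatest (P := fun k => n k ≤ m) h1 h
    omega
  have hKle : ∀ m, K m ≤ m := fun m => Nat.findGreatest_le m
  have hKuniq : ∀ m k, n k ≤ m → m < n (k+1) → K m = k := by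
    intro m k h1 h2
    rcases lt_trichotomy (K m) k with h | h | h
    · exfalso
      have : n (K m + 1) ≤ n k := hnmono.monotone h
      have := hK2 m
      omega
    · exact h
    · exfalso
      have : n (k + 1) ≤ n (K m) := hnmono.monotone h
      have := hK1 m
      omega
  have hKsucc : ∀ m, K m ≤ K (m+1) := by
    intro m
    exact Nat.le_findGreatest (le_trans (hKle m) (Nat.le_succ m))
      (le_trans (hK1 m) (Nat.le_succ m))
  -- the sequence r
  refine ⟨fun m => t (K m) * (1 + (1/2:ℝ)^(m+1)), ?_, ?_, ?_, ?_⟩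
  · intro m
    have := ht0 (K m)
    positivity
  · -- strictly decreasing
    apply strictAnti_nat_of_succ_lt
    intro m
    rcases eq_or_lt_of_le (hKsucc m) with h | h
    · rw [← h]
      have h1 : ((1:ℝ)/2)^(m+1+1) < (1/2:ℝ)^(m+1) :=
        pow_lt_pow_right_of_lt_one₀ (by norm_num) (by norm_num) (Nat.lt_succ_self _)
      have := ht0 (K m)
      nlinarith
    · have h1 : t (K (m+1)) ≤ t (K m + 1) := htanti h
      have h2 : t (K m + 1) ≤ t (K m) / 2 := ht_half (K m)
      have h3 : (1 + (1/2:ℝ)^(m+1+1)) ≤ 3/2 := by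
        have : ((1:ℝ)/2)^(m+1+1) ≤ (1/2:ℝ)^1 :=
          pow_le_pow_of_le_one (by norm_num) (by norm_num) (by omega)
        norm_num at this ⊢
        linarith
      have h4 : (0:ℝ) < 1 + (1/2:ℝ)^(m+1+1) := by positivity
      have h5 : (0:ℝ) < (1/2:ℝ)^(m+1) := by positivity
      have := ht0 (K m)
      have := ht0 (K (m+1))
      calc t (K (m+1)) * (1 + (1/2:ℝ)^(m+1+1))
          ≤ (t (K m) / 2) * (3/2) := by
            apply mul_le_mul (le_trans h1 h2) h3 h4.le
            linarith [ht0 (K m)]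
        _ < t (K m) * (1 + (1/2:ℝ)^(m+1)) := by nlinarith
  · -- convergence
    have hblock : ∀ N, ∑ m ∈ Ico (n N) (n (N+1)), a m * (t (K m) * (1 + (1/2:ℝ)^(m+1)))
        ≤ 2 * (1/2:ℝ)^N := by
      intro N
      have hstep : ∀ m ∈ Ico (n N) (n (N+1)),
          a m * (t (K m) * (1 + (1/2:ℝ)^(m+1))) ≤ a m * ((3/2) * t N) := by
        intro m hm
        rw [Finset.mem_Ico] at hm
        rw [hKuniq m N hm.1 hm.2]
        apply mul_le_mul_of_nonneg_left _ (ha_nonneg m)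
        have h3 : (1 + (1/2:ℝ)^(m+1)) ≤ 3/2 := by
          have : ((1:ℝ)/2)^(m+1) ≤ (1/2:ℝ)^1 :=
            pow_le_pow_of_le_one (by norm_num) (by norm_num) (by omega)
          norm_num at this ⊢
          linarith
        have := ht0 N
        nlinarith
      calc ∑ m ∈ Ico (n N) (n (N+1)), a m * (t (K m) * (1 + (1/2:ℝ)^(m+1)))
          ≤ ∑ m ∈ Ico (n N) (n (N+1)), a m * ((3/2) * t N) := Finset.sum_le_sum hstep
        _ = (3/2) * t N * A N := by rw [← Finset.sum_mul, hA]; ring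
        _ = (3/2) * (1/2:ℝ)^N * (A N / A N) := by rw [ht]; ring
        _ = (3/2) * (1/2:ℝ)^N := by rw [div_self (hA0 N).ne']; ring
        _ ≤ 2 * (1/2:ℝ)^N := by
            have : (0:ℝ) ≤ (1/2:ℝ)^N := by positivity
            nlinarith
    have hpart : ∀ N, ∑ m ∈ range N, a m * (t (K m) * (1 + (1/2:ℝ)^(m+1))) ≤ 4 := by
      intro N
      have hsub : ∑ m ∈ range N, a m * (t (K m) * (1 + (1/2:ℝ)^(m+1)))
          ≤ ∑ m ∈ range (n N), a m * (t (K m) * (1 + (1/2:ℝ)^(m+1))) := by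
        apply Finset.sum_le_sum_of_subset_of_nonneg
        · exact Finset.range_subset_range.2 (hn_le N)
        · intro m _ _
          have := ht0 (K m)
          have := ha_nonneg m
          positivity
      have hdecomp : ∀ N, ∑ m ∈ range (n N), a m * (t (K m) * (1 + (1/2:ℝ)^(m+1)))
          ≤ ∑ k ∈ range N, 2 * (1/2:ℝ)^k := by
        intro N
        induction N with
        | zero => simp [hn0]
        | succ N ih =>
          have hsplit := Finset.sum_Ico_consecutive
            (fun m => a m * (t (K m) * (1 + (1/2:ℝ)^(m+1))))
            (Nat.zero_le (n N)) (hnmono.monotone (Nat.le_succ N))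
          simp only [← Finset.range_eq_Ico, Nat.succ_eq_add_one] at hsplit
          rw [Finset.sum_range_succ, ← hsplit]
          exact add_le_add ih (hblock N)
      calc ∑ m ∈ range N, a m * (t (K m) * (1 + (1/2:ℝ)^(m+1)))
          ≤ ∑ k ∈ range N, 2 * (1/2:ℝ)^k := le_trans hsub (hdecomp N)
        _ = 2 * ∑ k ∈ range N, (1/2:ℝ)^k := by rw [Finset.mul_sum]
        _ ≤ 2 * 2 := by
            have := sum_geometric_two_le N
            linarith
        _ = 4 := by norm_num
    have hsummable : Summable (fun m => a m * (t (K m) * (1 + (1/2:ℝ)^(m+1)))) := by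
      apply summable_of_sum_range_le (c := 4) _ hpart
      intro m
      have := ht0 (K m)
      have := ha_nonneg m
      positivity
    rw [← ENNReal.ofReal_tsum_of_nonneg (fun m => by
      have := ht0 (K m); have := ha_nonneg m; positivity) hsummable]
    exact ENNReal.ofReal_ne_top
  · -- divergence
    have hblockdiv : ∀ k, 1 ≤ ∑ m ∈ Ico (n (k+1)) (n (k+2)),
        a m * c m * (t (K m) * (1 + (1/2:ℝ)^(m+1))) := by
      intro k
      have hstep : ∀ m ∈ Ico (n (k+1)) (n (k+2)),
          a m * ((2:ℝ)^(k+1) * t (k+1)) ≤ a m * c m * (t (K m) * (1 + (1/2:ℝ)^(m+1))) := by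
        intro m hm
        rw [Finset.mem_Ico] at hm
        rw [hKuniq m (k+1) hm.1 hm.2]
        have hc1 : (2:ℝ)^(k+1) ≤ c m := hcb k m hm.1
        have hfac : (1:ℝ) ≤ 1 + (1/2:ℝ)^(m+1) := by
          have : (0:ℝ) < (1/2:ℝ)^(m+1) := by positivity
          linarith
        have ht1 := ht0 (k+1)
        have ha1 := ha_nonneg m
        have h2 : (0:ℝ) < (2:ℝ)^(k+1) := by positivity
        calc a m * ((2:ℝ)^(k+1) * t (k+1)) ≤ a m * (c m * t (k+1)) := by
              apply mul_le_mul_of_nonneg_left _ ha1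
              exact mul_le_mul_of_nonneg_right hc1 ht1.le
          _ ≤ a m * (c m * (t (k+1) * (1 + (1/2:ℝ)^(m+1)))) := by
              apply mul_le_mul_of_nonneg_left _ ha1
              apply mul_le_mul_of_nonneg_left _ (hc_pos m).le
              nlinarith
          _ = a m * c m * (t (k+1) * (1 + (1/2:ℝ)^(m+1))) := by ring
      have h1 : ∑ m ∈ Ico (n (k+1)) (n (k+2)), a m * ((2:ℝ)^(k+1) * t (k+1))
          ≤ ∑ m ∈ Ico (n (k+1)) (n (k+2)),
            a m * c m * (t (K m) * (1 + (1/2:ℝ)^(m+1))) := Finset.sum_le_sum hstep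
      have h2 : ∑ m ∈ Ico (n (k+1)) (n (k+2)), a m * ((2:ℝ)^(k+1) * t (k+1))
          = (2:ℝ)^(k+1) * t (k+1) * A (k+1) := by
        rw [← Finset.sum_mul, hA]; ring
      have h3 : (2:ℝ)^(k+1) * t (k+1) * A (k+1) = 1 := by
        have hA' := (hA0 (k+1)).ne'
        have hone : ((2:ℝ)*(1/2))^(k+1) = 1 := by norm_num
        calc (2:ℝ)^(k+1) * t (k+1) * A (k+1)
            = ((2:ℝ)*(1/2))^(k+1) * (A (k+1) / A (k+1)) := by
              show (2:ℝ)^(k+1) * ((1/2:ℝ)^(k+1) / A (k+1)) * A (k+1)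
                = ((2:ℝ)*(1/2))^(k+1) * (A (k+1) / A (k+1))
              rw [mul_pow]; ring
          _ = 1 := by rw [div_self hA', hone, mul_one]
      rw [h2, h3] at h1
      exact h1
    have hge : ∀ J : ℕ, (J:ℝ) ≤ ∑ m ∈ Ico (n 1) (n (J+1)),
        a m * c m * (t (K m) * (1 + (1/2:ℝ)^(m+1))) := by
      intro J
      induction J with
      | zero => simp
      | succ J ih =>
        have hsplit := Finset.sum_Ico_consecutive
          (fun m => a m * c m * (t (K m) * (1 + (1/2:ℝ)^(m+1))))
          (hnmono.monotone (by omega : 1 ≤ J+1)) (hnmono.monotone (by omega : J+1 ≤ J+2))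
        push_cast
        rw [← hsplit]
        have := hblockdiv J
        linarith
    rw [eq_top_iff, ← ENNReal.iSup_natCast]
    apply iSup_le
    intro J
    calc (J:ENNReal) = ENNReal.ofReal (J:ℝ) := by rw [ENNReal.ofReal_natCast]
      _ ≤ ENNReal.ofReal (∑ m ∈ Ico (n 1) (n (J+1)),
          a m * c m * (t (K m) * (1 + (1/2:ℝ)^(m+1)))) := ENNReal.ofReal_le_ofReal (hge J)
      _ = ∑ m ∈ Ico (n 1) (n (J+1)),
          ENNReal.ofReal (a m * c m * (t (K m) * (1 + (1/2:ℝ)^(m+1)))) := by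
          apply ENNReal.ofReal_sum_of_nonneg
          intro m _
          have := ht0 (K m)
          have := ha_nonneg m
          have := (hc_pos m).le
          positivity
      _ ≤ ∑' m, ENNReal.ofReal (a m * c m * (t (K m) * (1 + (1/2:ℝ)^(m+1)))) :=
          ENNReal.sum_le_tsum _
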